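/- For y ∈ E× and x ∈ E with x x̄ + y + ȳ = 0, the identity β·n(x,y) = n(ȳ⁻¹x, y⁻¹)·h(ȳ⁻¹)·n'(-ȳ⁻¹x̄, y⁻¹) holds in GL₃(E). -/

import Mathlib

open Matrix

noncomputable section

variable {E : Type*} [Field E]

/-- `β` = antidiag(1,1,1). -/
def betaMat (E : Type*) [Field E] : Matrix (Fin 3) (Fin 3) E :=
  !![0, 0, 1; 0, 1, 0; 1, 0, 0]

/-- `n(x,y)`, upper unipotent. -/
def nMat (bar : E → E) (x y : E) : Matrix (Fin 3) (Fin 3) E :=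
  !![1, x, y; 0, 1, -(bar x); 0, 0, 1]

/-- `n'(x,y)`, lower unipotent. -/
def n'Mat (bar : E → E) (x y : E) : Matrix (Fin 3) (Fin 3) E :=
  !![1, 0, 0; x, 1, 0; y, -(bar x), 1]

/-- `h(x) = diag(x, -x̄ x⁻¹, x̄⁻¹)`. -/
def hMat (bar : E → E) (x : E) : Matrix (Fin 3) (Fin 3) E :=
  !![x, 0, 0; 0, -(bar x) * x⁻¹, 0; 0, 0, (bar x)⁻¹]

/-- for `y ∈ E×` and `x x̄ + y + ȳ = 0`,
`β·n(x,y) = n(ȳ⁻¹x, y⁻¹)·h(ȳ⁻¹)·n'(-ȳ⁻¹x̄, y⁻¹)` in `GL₃(E)`. -/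
theorem beta_mul_nxy (bar : E →+* E) (hbar : ∀ z, bar (bar z) = z)
    (x y : E) (hy : y ≠ 0) (hxy : x * bar x + y + bar y = 0) :
    betaMat E * nMat bar x y =
      nMat bar ((bar y)⁻¹ * x) y⁻¹ * hMat bar (bar y)⁻¹ *
        n'Mat bar (-((bar y)⁻¹ * bar x)) y⁻¹ := by
  have hyb : bar y ≠ 0 := fun h => hy (by rw [← hbar y, h, map_zero])
  have h1 : bar ((bar y)⁻¹) = y⁻¹ := by rw [map_inv₀, hbar]
  have h2 : bar ((bar y)⁻¹ * x) = y⁻¹ * bar x := by rw [_root_.map_mul, h1]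
  have h3 : bar (-((bar y)⁻¹ * bar x)) = -(y⁻¹ * x) := by
    rw [map_neg, _root_.map_mul, h1, hbar]
  unfold betaMat nMat n'Mat hMat
  ext i j
  fin_cases i <;> fin_cases j <;>
    simp [Matrix.mul_apply, Fin.sum_univ_three, Matrix.vecHead, Matrix.vecTail,
      h1, h2, h3] <;>
    field_simp
  all_goals first
    | ring1
    | linear_combination (-y) * hxy
    | linear_combination y * hxy
    | linear_combination hxy
    | linear_combination (-1 : E) * hxy

end
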